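/- Let ψ : [0,∞) → [0,∞) be a nonincreasing function, and assume that there exist M > 0, γ > 0 and δ > 1 such that ψ(h) ≤ M ψ(k)^δ / (h − k)^γ for all h > k > 0. Then ψ(d) = 0, where d = M^{1/γ} ψ(0)^{(δ−1)/γ} 2^{δ/(δ−1)}. -/

import Mathlib

open Filter Topology Real

/-- Stampacchia's lemma: if `ψ : [0,∞) → [0,∞)` is nonincreasing and
`ψ(h) ≤ M ψ(k)^δ / (h − k)^γ` for all `h > k > 0`, with `M > 0`, `γ > 0`, `δ > 1`,
then `ψ(d) = 0` for `d = M^{1/γ} ψ(0)^{(δ−1)/γ} 2^{δ/(δ−1)}`. -/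
theorem stampacchia (ψ : ℝ → ℝ) (hnonneg : ∀ t : ℝ, 0 ≤ t → 0 ≤ ψ t)
    (hmono : ∀ s t : ℝ, 0 ≤ s → s ≤ t → ψ t ≤ ψ s)
    (M γ δ : ℝ) (hM : 0 < M) (hγ : 0 < γ) (hδ : 1 < δ)
    (hrec : ∀ h k : ℝ, 0 < k → k < h → ψ h ≤ M * ψ k ^ δ / (h - k) ^ γ) :
    ψ (M ^ (1 / γ) * ψ 0 ^ ((δ - 1) / γ) * 2 ^ (δ / (δ - 1))) = 0 := by
  have hδ1 : (0:ℝ) < δ - 1 := by linarith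
  have hδ0 : (0:ℝ) < δ := by linarith
  have hA0 : 0 ≤ ψ 0 := hnonneg 0 le_rfl
  set A := ψ 0 with hA
  rcases hA0.eq_or_lt with hA0' | hApos
  · -- ψ 0 = 0, so d = 0
    have hd0 : M ^ (1 / γ) * A ^ ((δ - 1) / γ) * 2 ^ (δ / (δ - 1)) = 0 := by
      rw [← hA0', Real.zero_rpow (by positivity : (δ - 1) / γ ≠ 0)]
      ring
    rw [hd0]
    exact hA0'.symm
  · set d := M ^ (1 / γ) * A ^ ((δ - 1) / γ) * 2 ^ (δ / (δ - 1)) with hd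
    have hdpos : 0 < d := by
      rw [hd]; positivity
    -- strengthened recurrence allowing k = 0
    have hrec' : ∀ h k : ℝ, 0 ≤ k → k < h → ψ h ≤ M * ψ k ^ δ / (h - k) ^ γ := by
      intro h k hk hkh
      rcases hk.eq_or_lt with hk0 | hkpos
      · subst hk0
        have hhpos : 0 < h := hkh
        have hbound : ∀ t ∈ Set.Ioo (0:ℝ) h, ψ h ≤ M * A ^ δ / (h - t) ^ γ := by
          intro t ht
          calc ψ h ≤ M * ψ t ^ δ / (h - t) ^ γ := hrec h t ht.1 ht.2
            _ ≤ M * A ^ δ / (h - t) ^ γ := by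
              apply div_le_div_of_nonneg_right ?_ (by
                have : 0 < h - t := by linarith [ht.2]
                positivity)
              exact mul_le_mul_of_nonneg_left
                (Real.rpow_le_rpow (hnonneg t ht.1.le) (hmono 0 t le_rfl ht.1.le) hδ0.le)
                hM.le
        have hcont : Tendsto (fun t : ℝ => M * A ^ δ / (h - t) ^ γ) (𝓝[>] 0)
            (𝓝 (M * A ^ δ / (h - 0) ^ γ)) := by
          apply Tendsto.mono_left _ nhdsWithin_le_nhds
          apply ContinuousAt.tendsto
          apply ContinuousAt.div continuousAt_const
          · exact (Real.continuousAt_rpow_const (h - 0) γ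
              (Or.inl (by simpa using hhpos.ne'))).comp
              (continuousAt_const.sub continuousAt_id)
          · have : (0:ℝ) < (h - 0) ^ γ := by simpa using Real.rpow_pos_of_pos hhpos γ
            exact this.ne'
        have := ge_of_tendsto hcont (by
          filter_upwards [Ioo_mem_nhdsGT_of_mem (by simpa using hhpos : (0:ℝ) ∈ Set.Ico 0 h)]
            with t ht using hbound t ht)
        simpa using this
      · exact hrec h k hkpos hkh
    -- key induction
    have key : ∀ n : ℕ, ψ (d * (1 - 2 ^ (-(n:ℝ)))) ≤ A * 2 ^ (-(n:ℝ) * γ / (δ - 1)) := by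
      intro n
      induction n with
      | zero => simp [hA]
      | succ n ih =>
        have h2n : (0:ℝ) < 2 ^ (-(n:ℝ)) := by positivity
        have h2n1 : (0:ℝ) < 2 ^ (-((n:ℝ)+1)) := by positivity
        have h2le : (2:ℝ) ^ (-((n:ℝ)+1)) < 2 ^ (-(n:ℝ)) := by
          apply Real.rpow_lt_rpow_left_iff (by norm_num : (1:ℝ) < 2) |>.mpr
          linarith
        have h2le1 : (2:ℝ) ^ (-(n:ℝ)) ≤ 1 := by
          apply Real.rpow_le_one_of_one_le_of_nonpos (by norm_num)
          simp [neg_nonpos]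
        have hkpos : 0 ≤ d * (1 - 2 ^ (-(n:ℝ))) := by
          apply mul_nonneg hdpos.le; linarith
        have hkh : d * (1 - 2 ^ (-(n:ℝ))) < d * (1 - 2 ^ (-((n:ℝ)+1))) := by
          apply mul_lt_mul_of_pos_left _ hdpos
          linarith
        have hdiff : d * (1 - 2 ^ (-((n:ℝ)+1))) - d * (1 - 2 ^ (-(n:ℝ)))
            = d * 2 ^ (-((n:ℝ)+1)) := by
          have : (2:ℝ) ^ (-(n:ℝ)) = 2 ^ (-((n:ℝ)+1)) * 2 := by
            rw [show -(n:ℝ) = -((n:ℝ)+1) + 1 by ring, Real.rpow_add (by norm_num),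
              Real.rpow_one]
          rw [this]; ring
        have hcast : ((n+1 : ℕ) : ℝ) = (n:ℝ) + 1 := by push_cast; ring
        rw [hcast]
        calc ψ (d * (1 - 2 ^ (-((n:ℝ)+1))))
            ≤ M * ψ (d * (1 - 2 ^ (-(n:ℝ)))) ^ δ
              / (d * (1 - 2 ^ (-((n:ℝ)+1))) - d * (1 - 2 ^ (-(n:ℝ)))) ^ γ :=
              hrec' _ _ hkpos hkh
          _ = M * ψ (d * (1 - 2 ^ (-(n:ℝ)))) ^ δ / (d * 2 ^ (-((n:ℝ)+1))) ^ γ := by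
              rw [hdiff]
          _ ≤ M * (A * 2 ^ (-(n:ℝ) * γ / (δ - 1))) ^ δ / (d * 2 ^ (-((n:ℝ)+1))) ^ γ := by
              apply div_le_div_of_nonneg_right ?_ (by positivity)
              exact mul_le_mul_of_nonneg_left
                (Real.rpow_le_rpow (hnonneg _ hkpos) ih hδ0.le) hM.le
          _ = A * 2 ^ (-((n:ℝ)+1) * γ / (δ - 1)) := by
              have two_pos : (0:ℝ) < 2 := by norm_num
              have hdγ : d ^ γ = M * A ^ (δ - 1) * 2 ^ (γ * δ / (δ - 1)) := by
                rw [hd, Real.mul_rpow (by positivity) (by positivity),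
                  Real.mul_rpow (by positivity) (by positivity),
                  ← Real.rpow_mul hM.le, ← Real.rpow_mul hA0,
                  ← Real.rpow_mul two_pos.le,
                  one_div_mul_cancel hγ.ne', div_mul_cancel₀ _ hγ.ne', Real.rpow_one]
                ring_nf
              have hnum : (A * 2 ^ (-(n:ℝ) * γ / (δ - 1))) ^ δ
                  = A ^ (δ - 1) * A * (2 ^ (-(n:ℝ) * γ / (δ - 1) * δ)) := by
                rw [Real.mul_rpow hA0 (by positivity), ← Real.rpow_mul two_pos.le,
                  show A ^ δ = A ^ (δ - 1) * A by
                    rw [← Real.rpow_add_one hApos.ne' (δ - 1)]; ring_nf]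
              have hden : (d * 2 ^ (-((n:ℝ)+1))) ^ γ
                  = M * A ^ (δ - 1) * 2 ^ (γ * δ / (δ - 1)) * 2 ^ (-((n:ℝ)+1) * γ) := by
                rw [Real.mul_rpow hdpos.le (by positivity), ← Real.rpow_mul two_pos.le, hdγ]
              have hexp : -(n:ℝ) * γ / (δ - 1) * δ
                  = γ * δ / (δ - 1) + -((n:ℝ)+1) * γ + -((n:ℝ)+1) * γ / (δ - 1) := by
                field_simp
                ring
              rw [hnum, hden, hexp, Real.rpow_add two_pos, Real.rpow_add two_pos]
              have e1 : (0:ℝ) < 2 ^ (γ * δ / (δ - 1)) := by positivity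
              have e2 : (0:ℝ) < 2 ^ (-((n:ℝ)+1) * γ) := by positivity
              have e3 : (0:ℝ) < A ^ (δ - 1) := by positivity
              field_simp
    -- conclude
    have hled : ∀ n : ℕ, ψ d ≤ A * 2 ^ (-(n:ℝ) * γ / (δ - 1)) := by
      intro n
      refine le_trans (hmono _ d ?_ ?_) (key n)
      · apply mul_nonneg hdpos.le
        have : (2:ℝ) ^ (-(n:ℝ)) ≤ 1 := by
          apply Real.rpow_le_one_of_one_le_of_nonpos (by norm_num)
          simp [neg_nonpos]
        linarith
      · nlinarith [Real.rpow_pos_of_pos (by norm_num : (0:ℝ) < 2) (-(n:ℝ)), hdpos]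
    have htend : Tendsto (fun n : ℕ => A * 2 ^ (-(n:ℝ) * γ / (δ - 1))) atTop (𝓝 0) := by
      have heq : ∀ n : ℕ, A * 2 ^ (-(n:ℝ) * γ / (δ - 1))
          = A * ((2:ℝ) ^ (-γ / (δ - 1))) ^ n := by
        intro n
        rw [← Real.rpow_natCast ((2:ℝ) ^ (-γ / (δ - 1))) n, ← Real.rpow_mul (by norm_num)]
        ring_nf
      simp only [heq]
      rw [show (0:ℝ) = A * 0 by ring]
      apply Tendsto.const_mul
      apply tendsto_pow_atTop_nhds_zero_of_lt_one (by positivity)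
      exact Real.rpow_lt_one_of_one_lt_of_neg (by norm_num)
        (by rw [neg_div]; exact neg_lt_zero.mpr (by positivity))
    refine le_antisymm (ge_of_tendsto' htend hled) (hnonneg d hdpos.le)
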